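/- Suppose the quantity 2[α(p−1) − (p+1)]/(δ(p−1)²) is positive, set a = −2/(p−1), and let b_∞ > 0 be the positive real number with b_∞^{p−1} = 2[α(p−1) − (p+1)]/(δ(p−1)²). If there exists ε > 0 such that the function u_∞(x) = b_∞·x^a satisfies the perturbed Lane–Emden equation for all x ∈ (0, ε), then the coefficients satisfy a(a−1)·a_k + a·b_k + c_k = 0 for every k ∈ {−1, 0, …, n}. -/

import Mathlib

set_option autoImplicit false

open Real Set

/-- If the singular function `u_∞(x) = b_∞ x^a`, `a = -2/(p-1)`, solves the
perturbed Lane–Emden equation on some interval `(0, ε)`, then the matching conditions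
`a(a-1) a_k + a b_k + c_k = 0` hold for every `k ∈ {-1, ..., n}`. -/
theorem perturbedLaneEmden_singular_solution_necessary
    (p : ℕ) (hp : 1 < p) (α δ : ℝ) (hα : 0 < α) (hδ : δ ≠ 0)
    (n : ℕ) (a b c : ℤ → ℝ)
    (hpos : 0 < 2 * (α * ((p : ℝ) - 1) - ((p : ℝ) + 1)) / (δ * ((p : ℝ) - 1) ^ 2))
    (binf : ℝ) (hbinf : 0 < binf)
    (hbinfp : binf ^ (p - 1)
      = 2 * (α * ((p : ℝ) - 1) - ((p : ℝ) + 1)) / (δ * ((p : ℝ) - 1) ^ 2))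
    (u : ℝ → ℝ) (hu : u = fun x : ℝ => binf * x ^ (-2 / ((p : ℝ) - 1)))
    (heq : ∃ ε > (0 : ℝ), ∀ x ∈ Ioo (0 : ℝ) ε,
      (1 + ∑ k ∈ Finset.Icc (-1 : ℤ) (n : ℤ), a k * x ^ (k + 2)) * deriv (deriv u) x
        + (α / x + ∑ k ∈ Finset.Icc (-1 : ℤ) (n : ℤ), b k * x ^ (k + 1)) * deriv u x
        + (∑ k ∈ Finset.Icc (-1 : ℤ) (n : ℤ), c k * x ^ k) * u x
        + δ * u x ^ p = 0) :
    ∀ k ∈ Finset.Icc (-1 : ℤ) (n : ℤ),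
      (-2 / ((p : ℝ) - 1)) * (-2 / ((p : ℝ) - 1) - 1) * a k
        + (-2 / ((p : ℝ) - 1)) * b k + c k = 0 := by
  set A : ℝ := -2 / ((p : ℝ) - 1) with hA
  have hp1 : (1 : ℝ) < (p : ℝ) := by exact_mod_cast hp
  have hpm1 : ((p : ℝ) - 1) ≠ 0 := by linarith
  -- derivative computations
  have hderiv : ∀ x : ℝ, 0 < x → HasDerivAt u (binf * (A * x ^ (A - 1))) x := by
    intro x hx
    rw [hu]
    exact (Real.hasDerivAt_rpow_const (Or.inl hx.ne')).const_mul binf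
  have hu1 : ∀ x : ℝ, 0 < x → deriv u x = binf * (A * x ^ (A - 1)) :=
    fun x hx => (hderiv x hx).deriv
  have hu2 : ∀ x : ℝ, 0 < x →
      deriv (deriv u) x = binf * A * ((A - 1) * x ^ (A - 1 - 1)) := by
    intro x hx
    have hev : deriv u =ᶠ[nhds x] fun y => binf * A * y ^ (A - 1) := by
      filter_upwards [Ioi_mem_nhds hx] with y hy
      rw [hu1 y hy]; ring
    rw [hev.deriv_eq]
    exact ((Real.hasDerivAt_rpow_const (p := A - 1) (Or.inl hx.ne')).const_mul
      (binf * A)).deriv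
  -- exponent arithmetic
  have hAp : A * ((p : ℝ) - 1) = -2 := by rw [hA]; field_simp
  have hApow : A * (p : ℝ) = A - 1 - 1 := by linear_combination hAp
  -- key constant identity
  have hC : A * (A - 1) + α * A + δ * binf ^ (p - 1) = 0 := by
    rw [hbinfp, hA]
    field_simp
    ring
  set d : ℤ → ℝ := fun k => A * (A - 1) * a k + A * b k + c k with hd
  set P : Polynomial ℝ :=
    ∑ k ∈ Finset.Icc (-1 : ℤ) (n : ℤ), Polynomial.C (d k) * Polynomial.X ^ (k + 1).toNat
    with hP
  obtain ⟨ε, hε, hεeq⟩ := heq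
  have hEval : ∀ x : ℝ, P.eval x =
      ∑ k ∈ Finset.Icc (-1 : ℤ) (n : ℤ), d k * x ^ (k + 1).toNat := by
    intro x
    rw [hP, Polynomial.eval_finset_sum]
    simp
  have hroot : ∀ x ∈ Ioo (0 : ℝ) ε, P.eval x = 0 := by
    intro x hx
    have hx0 : (0 : ℝ) < x := hx.1
    have h0 := hεeq x hx
    rw [hu1 x hx0, hu2 x hx0, hu] at h0
    simp only at h0
    -- per-term exponent identities
    have htn : ∀ k ∈ Finset.Icc (-1 : ℤ) (n : ℤ), (((k + 1).toNat : ℕ) : ℝ) = (k : ℝ) + 1 := by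
      intro k hk
      have hk' := Finset.mem_Icc.mp hk
      have h1 : ((k + 1).toNat : ℤ) = k + 1 := Int.toNat_of_nonneg (by omega)
      exact_mod_cast congrArg (fun m : ℤ => (m : ℝ)) h1
    have E1 : (∑ k ∈ Finset.Icc (-1 : ℤ) (n : ℤ), a k * x ^ (k + 2)) * x ^ (A - 1 - 1)
        = (∑ k ∈ Finset.Icc (-1 : ℤ) (n : ℤ), a k * x ^ (k + 1).toNat) * x ^ (A - 1) := by
      rw [Finset.sum_mul, Finset.sum_mul]
      refine Finset.sum_congr rfl fun k hk => ?_
      have h : (x : ℝ) ^ (k + 2) * x ^ (A - 1 - 1) = x ^ (k + 1).toNat * x ^ (A - 1) := by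
        rw [← Real.rpow_intCast x (k + 2), ← Real.rpow_natCast x (k + 1).toNat,
          ← Real.rpow_add hx0, ← Real.rpow_add hx0]
        congr 1
        rw [htn k hk]
        push_cast
        ring
      linear_combination a k * h
    have E2 : (∑ k ∈ Finset.Icc (-1 : ℤ) (n : ℤ), b k * x ^ (k + 1))
        = ∑ k ∈ Finset.Icc (-1 : ℤ) (n : ℤ), b k * x ^ (k + 1).toNat := by
      refine Finset.sum_congr rfl fun k hk => ?_
      have hk' := Finset.mem_Icc.mp hk
      have h : (x : ℝ) ^ (k + 1) = x ^ (k + 1).toNat := by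
        conv_lhs => rw [← Int.toNat_of_nonneg (show (0 : ℤ) ≤ k + 1 by omega),
          zpow_natCast]
      rw [h]
    have E3 : (∑ k ∈ Finset.Icc (-1 : ℤ) (n : ℤ), c k * x ^ k) * x ^ A
        = (∑ k ∈ Finset.Icc (-1 : ℤ) (n : ℤ), c k * x ^ (k + 1).toNat) * x ^ (A - 1) := by
      rw [Finset.sum_mul, Finset.sum_mul]
      refine Finset.sum_congr rfl fun k hk => ?_
      have h : (x : ℝ) ^ k * x ^ A = x ^ (k + 1).toNat * x ^ (A - 1) := by
        rw [← Real.rpow_intCast x k, ← Real.rpow_natCast x (k + 1).toNat,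
          ← Real.rpow_add hx0, ← Real.rpow_add hx0]
        congr 1
        rw [htn k hk]
        ring
      linear_combination c k * h
    have E4 : ∑ k ∈ Finset.Icc (-1 : ℤ) (n : ℤ), d k * x ^ (k + 1).toNat
        = A * (A - 1) * (∑ k ∈ Finset.Icc (-1 : ℤ) (n : ℤ), a k * x ^ (k + 1).toNat)
          + A * (∑ k ∈ Finset.Icc (-1 : ℤ) (n : ℤ), b k * x ^ (k + 1).toNat)
          + (∑ k ∈ Finset.Icc (-1 : ℤ) (n : ℤ), c k * x ^ (k + 1).toNat) := by
      rw [Finset.mul_sum, Finset.mul_sum, ← Finset.sum_add_distrib, ← Finset.sum_add_distrib]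
      refine Finset.sum_congr rfl fun k hk => ?_
      rw [hd]
      ring
    have E5 : α / x * (x ^ (A - 1)) = α * x ^ (A - 1 - 1) := by
      rw [show A - 1 - 1 = A - 1 + (-1) by ring, Real.rpow_add hx0,
        Real.rpow_neg_one]
      field_simp
    have E6 : (binf * x ^ A) ^ p = binf ^ (p - 1) * binf * x ^ (A - 1 - 1) := by
      rw [mul_pow, ← Real.rpow_natCast (x ^ A) p, ← Real.rpow_mul hx0.le, hApow,
        show binf ^ p = binf ^ (p - 1) * binf by
          rw [← pow_succ]; congr 1; omega]
    have key : binf * x ^ (A - 1) * P.eval x = 0 := by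
      rw [hEval]
      linear_combination h0 - binf * A * (A - 1) * E1 - binf * A * x ^ (A - 1) * E2
        - binf * E3 + binf * x ^ (A - 1) * E4 - binf * A * E5 - δ * E6
        - binf * x ^ (A - 1 - 1) * hC
    have hX : (0 : ℝ) < x ^ (A - 1) := Real.rpow_pos_of_pos hx0 _
    rcases mul_eq_zero.mp key with h | h
    · exact absurd h (mul_ne_zero hbinf.ne' hX.ne')
    · exact h
  -- P has infinitely many roots, hence is zero
  have hPzero : P = 0 := by
    refine Polynomial.eq_zero_of_infinite_isRoot P ?_
    refine Set.Infinite.mono ?_ (Set.Ioo_infinite hε)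
    intro x hx
    exact hroot x hx
  -- extract coefficients
  intro k hk
  have hk' := Finset.mem_Icc.mp hk
  have hcoeff : P.coeff (k + 1).toNat = d k := by
    rw [hP, Polynomial.finset_sum_coeff]
    rw [Finset.sum_eq_single_of_mem k hk]
    · simp [Polynomial.coeff_X_pow]
    · intro j hj hjk
      have hj' := Finset.mem_Icc.mp hj
      simp only [Polynomial.coeff_C_mul, Polynomial.coeff_X_pow]
      rw [if_neg (by omega)]
      ring
  rw [hPzero] at hcoeff
  simp only [Polynomial.coeff_zero] at hcoeff
  have : d k = 0 := hcoeff.symm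
  rw [hd] at this
  exact this
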